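/- Let m ≥ 2 be a natural number, let n_1, …, n_m be natural numbers with n_k ≥ 2 for all k, let λ, ε, p_1, …, p_m be real numbers, and suppose γ : {1,…,m}² → ℝ satisfies: for all k ≠ l, γ_{kl} = 1 + λ·γ_{lk}·((n_k−1)·ε + 1) + λ·γ_{ll}·(n_l−1)·p_l + λ·∑_{s≠k,l} γ_{ls}·n_s·ε; and for all k, γ_{kk} = 1 + λ·γ_{kk}·((n_k−2)·p_k + 1) + λ·∑_{s≠k} γ_{ks}·n_s·ε. For a degree vector d = (d_1,…,d_m) ∈ ℕ^m define a_k(d) = 1 + λ·∑_{l=1}^m γ_{kl}·d_l. Then for every k ∈ {1,…,m} and every d, a_k(d) = 1 + λ·∑_{l=1}^m d_l·T_{kl}, where: for l ≠ k, T_{kl} = ∑ over degree vectors d' with d'_l ∈ {0,…,n_l−1}, d'_k ∈ {1,…,n_k}, and d'_q ∈ {0,…,n_q} for q ≠ k,l, of C(n_l−1, d'_l)·p_l^(d'_l)·(1−p_l)^(n_l−1−d'_l) · C(n_k−1, d'_k−1)·ε^(d'_k−1)·(1−ε)^(n_k−d'_k) · ∏_{q≠k,l} C(n_q, d'_q)·ε^(d'_q)·(1−ε)^(n_q−d'_q)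 · a_l(d'); and T_{kk} = ∑ over degree vectors d' with d'_k ∈ {1,…,n_k−1} and d'_q ∈ {0,…,n_q} for q ≠ k, of C(n_k−2, d'_k−1)·p_k^(d'_k−1)·(1−p_k)^(n_k−1−d'_k) · ∏_{q≠k} C(n_q, d'_q)·ε^(d'_q)·(1−ε)^(n_q−d'_q) · a_k(d'). (This verifies the Bayesian–Nash equilibrium of the linear-quadratic game under stochastic block network generation: an agent in group k with degree vector d plays a_k(d) = 1 + λ∑_l γ_{kl} d_l.) -/

import Mathlib

open Finset

/-- Interim belief weight that an agent in group `k`, conditioning on a link to a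
neighbor in group `l ≠ k`, assigns to that neighbor having degree vector `d'` under
the stochastic block model. -/
def sbWeightOff (m : ℕ) (n : Fin m → ℕ) (p : Fin m → ℝ) (ε : ℝ)
    (k l : Fin m) (d' : Fin m → ℕ) : ℝ :=
  ((n l - 1).choose (d' l) : ℝ) * p l ^ (d' l) * (1 - p l) ^ (n l - 1 - d' l) *
    (((n k - 1).choose (d' k - 1) : ℝ) * ε ^ (d' k - 1) * (1 - ε) ^ (n k - d' k)) *
    ∏ q ∈ Finset.univ \ {k, l},
      ((n q).choose (d' q) : ℝ) * ε ^ (d' q) * (1 - ε) ^ (n q - d' q)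

/-- Interim belief weight that an agent in group `k`, conditioning on a link to a
neighbor in its own group, assigns to that neighbor having degree vector `d'`. -/
def sbWeightDiag (m : ℕ) (n : Fin m → ℕ) (p : Fin m → ℝ) (ε : ℝ)
    (k : Fin m) (d' : Fin m → ℕ) : ℝ :=
  ((n k - 2).choose (d' k - 1) : ℝ) * p k ^ (d' k - 1) * (1 - p k) ^ (n k - 1 - d' k) *
    ∏ q ∈ Finset.univ \ {k},
      ((n q).choose (d' q) : ℝ) * ε ^ (d' q) * (1 - ε) ^ (n q - d' q)

/-- Domain of degree vectors of a neighbor in group `l ≠ k` of an agent in group `k`: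
`d'_l ∈ {0,…,n_l-1}`, `d'_k ∈ {1,…,n_k}`, `d'_q ∈ {0,…,n_q}` for `q ≠ k, l`. -/
def sbDomOff (m : ℕ) (n : Fin m → ℕ) (k l : Fin m) : Finset (Fin m → ℕ) :=
  Fintype.piFinset fun q =>
    if q = k then Finset.Icc 1 (n k)
    else if q = l then Finset.range (n l)
    else Finset.range (n q + 1)

/-- Domain of degree vectors of a neighbor in the own group `k` of an agent in
group `k`: `d'_k ∈ {1,…,n_k-1}`, `d'_q ∈ {0,…,n_q}` for `q ≠ k`. -/
def sbDomDiag (m : ℕ) (n : Fin m → ℕ) (k : Fin m) : Finset (Fin m → ℕ) :=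
  Fintype.piFinset fun q =>
    if q = k then Finset.Icc 1 (n k - 1)
    else Finset.range (n q + 1)


lemma binom_mass (q : ℝ) (N : ℕ) :
    ∑ j ∈ range (N + 1), ((N.choose j : ℝ) * q ^ j * (1 - q) ^ (N - j)) = 1 := by
  have h := add_pow q (1 - q) N
  have h1 : q + (1 - q) = 1 := by ring
  rw [h1, one_pow] at h
  calc ∑ j ∈ range (N + 1), ((N.choose j : ℝ) * q ^ j * (1 - q) ^ (N - j))
      = ∑ j ∈ range (N + 1), q ^ j * (1 - q) ^ (N - j) * (N.choose j : ℝ) :=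
        Finset.sum_congr rfl fun j _ => by ring
    _ = 1 := h.symm

lemma binom_mean (q : ℝ) (N : ℕ) :
    ∑ j ∈ range (N + 1), (j : ℝ) * ((N.choose j : ℝ) * q ^ j * (1 - q) ^ (N - j))
      = (N : ℝ) * q := by
  cases N with
  | zero => simp
  | succ M =>
    rw [Finset.sum_range_succ']
    simp only [Nat.cast_zero, zero_mul, add_zero]
    have key : ∀ i ∈ range (M + 1),
        ((i + 1 : ℕ) : ℝ) * (((M + 1).choose (i + 1) : ℝ) * q ^ (i + 1) * (1 - q) ^ (M + 1 - (i + 1)))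
          = ((M + 1 : ℕ) : ℝ) * q * ((M.choose i : ℝ) * q ^ i * (1 - q) ^ (M - i)) := by
      intro i _
      have hc : (M + 1) * M.choose i = (M + 1).choose (i + 1) * (i + 1) :=
        Nat.add_one_mul_choose_eq M i
      have hc' : ((M + 1 : ℕ) : ℝ) * (M.choose i : ℝ) = ((M + 1).choose (i + 1) : ℝ) * ((i + 1 : ℕ) : ℝ) := by
        exact_mod_cast congrArg (fun x : ℕ => (x : ℝ)) hc
      have he : M + 1 - (i + 1) = M - i := by omega
      rw [he, pow_succ]
      push_cast at hc' ⊢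
      linear_combination (q ^ i * q * (1 - q) ^ (M - i)) * hc'.symm
    rw [Finset.sum_congr rfl key, ← Finset.mul_sum, binom_mass]
    push_cast; ring

lemma binom_mass' (q : ℝ) (N : ℕ) (hN : 1 ≤ N) :
    ∑ j ∈ range N, (((N - 1).choose j : ℝ) * q ^ j * (1 - q) ^ (N - 1 - j)) = 1 := by
  obtain ⟨M, rfl⟩ : ∃ M, N = M + 1 := ⟨N - 1, by omega⟩
  simpa using binom_mass q M

lemma binom_mean' (q : ℝ) (N : ℕ) (hN : 1 ≤ N) :
    ∑ j ∈ range N, (j : ℝ) * (((N - 1).choose j : ℝ) * q ^ j * (1 - q) ^ (N - 1 - j))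
      = ((N : ℝ) - 1) * q := by
  obtain ⟨M, rfl⟩ : ∃ M, N = M + 1 := ⟨N - 1, by omega⟩
  have := binom_mean q M
  simpa using this

lemma shift_mass (q : ℝ) (N : ℕ) (hN : 1 ≤ N) :
    ∑ j ∈ Icc 1 N, (((N - 1).choose (j - 1) : ℝ) * q ^ (j - 1) * (1 - q) ^ (N - j)) = 1 := by
  obtain ⟨M, rfl⟩ : ∃ M, N = M + 1 := ⟨N - 1, by omega⟩
  rw [← Finset.Ico_add_one_right_eq_Icc, Finset.sum_Ico_eq_sum_range]
  have h1 : ∀ i ∈ range (M + 1 + 1 - 1),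
      (((M + 1 - 1).choose (1 + i - 1) : ℝ) * q ^ (1 + i - 1) * (1 - q) ^ (M + 1 - (1 + i)))
        = ((M.choose i : ℝ) * q ^ i * (1 - q) ^ (M - i)) := by
    intro i _
    have e1 : 1 + i - 1 = i := by omega
    have e2 : M + 1 - (1 + i) = M - i := by omega
    have e3 : M + 1 - 1 = M := by omega
    rw [e1, e2, e3]
  rw [Finset.sum_congr rfl h1]
  have e4 : M + 1 + 1 - 1 = M + 1 := by omega
  rw [e4]
  exact binom_mass q M

lemma shift_mean (q : ℝ) (N : ℕ) (hN : 1 ≤ N) :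
    ∑ j ∈ Icc 1 N, (j : ℝ) * (((N - 1).choose (j - 1) : ℝ) * q ^ (j - 1) * (1 - q) ^ (N - j))
      = 1 + ((N : ℝ) - 1) * q := by
  obtain ⟨M, rfl⟩ : ∃ M, N = M + 1 := ⟨N - 1, by omega⟩
  rw [← Finset.Ico_add_one_right_eq_Icc, Finset.sum_Ico_eq_sum_range]
  have h1 : ∀ i ∈ range (M + 1 + 1 - 1),
      ((1 + i : ℕ) : ℝ) * (((M + 1 - 1).choose (1 + i - 1) : ℝ) * q ^ (1 + i - 1) * (1 - q) ^ (M + 1 - (1 + i)))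
        = ((M.choose i : ℝ) * q ^ i * (1 - q) ^ (M - i))
          + (i : ℝ) * ((M.choose i : ℝ) * q ^ i * (1 - q) ^ (M - i)) := by
    intro i _
    have e1 : 1 + i - 1 = i := by omega
    have e2 : M + 1 - (1 + i) = M - i := by omega
    have e3 : M + 1 - 1 = M := by omega
    rw [e1, e2, e3]
    push_cast
    ring
  rw [Finset.sum_congr rfl h1]
  have e4 : M + 1 + 1 - 1 = M + 1 := by omega
  rw [e4, Finset.sum_add_distrib, binom_mass, binom_mean]
  push_cast; ring

lemma expectation_eq {m : ℕ} (t : Fin m → Finset ℕ) (W : Fin m → ℕ → ℝ)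
    (hmass : ∀ q, ∑ j ∈ t q, W q j = 1) (lam : ℝ) (c : Fin m → ℝ) :
    ∑ d' ∈ Fintype.piFinset t, (∏ q, W q (d' q)) * (1 + lam * ∑ s, c s * (d' s : ℝ))
      = 1 + lam * ∑ s, c s * (∑ j ∈ t s, (j : ℝ) * W s j) := by
  classical
  have hmassT : ∑ d' ∈ Fintype.piFinset t, ∏ q, W q (d' q) = 1 := by
    rw [← Finset.prod_univ_sum]
    simp [hmass]
  have hmom : ∀ s : Fin m, ∑ d' ∈ Fintype.piFinset t, (d' s : ℝ) * ∏ q, W q (d' q)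
      = ∑ j ∈ t s, (j : ℝ) * W s j := by
    intro s
    have step : ∀ d' : Fin m → ℕ, (d' s : ℝ) * ∏ q, W q (d' q)
        = ∏ q, (if q = s then (d' q : ℝ) * W q (d' q) else W q (d' q)) := by
      intro d'
      rw [← Finset.mul_prod_erase Finset.univ
            (fun q => if q = s then (d' q : ℝ) * W q (d' q) else W q (d' q)) (Finset.mem_univ s),
          ← Finset.mul_prod_erase Finset.univ (fun q => W q (d' q)) (Finset.mem_univ s)]
      have h1 : ∏ q ∈ Finset.univ.erase s,
          (if q = s then (d' q : ℝ) * W q (d' q) else W q (d' q))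
            = ∏ q ∈ Finset.univ.erase s, W q (d' q) :=
        Finset.prod_congr rfl fun q hq => by rw [if_neg (Finset.ne_of_mem_erase hq)]
      rw [h1, if_pos rfl]
      ring
    calc ∑ d' ∈ Fintype.piFinset t, (d' s : ℝ) * ∏ q, W q (d' q)
        = ∑ d' ∈ Fintype.piFinset t,
            ∏ q, (if q = s then (d' q : ℝ) * W q (d' q) else W q (d' q)) :=
          Finset.sum_congr rfl fun d' _ => step d'
      _ = ∏ q, ∑ j ∈ t q, (if q = s then (j : ℝ) * W q j else W q j) :=
          (Finset.prod_univ_sum t fun q j => if q = s then (j : ℝ) * W q j else W q j).symm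
      _ = (∑ j ∈ t s, (j : ℝ) * W s j) := by
          rw [← Finset.mul_prod_erase Finset.univ
                (fun q => ∑ j ∈ t q, (if q = s then (j : ℝ) * W q j else W q j))
                (Finset.mem_univ s)]
          have h2 : ∏ q ∈ Finset.univ.erase s,
              (∑ j ∈ t q, (if q = s then (j : ℝ) * W q j else W q j)) = 1 := by
            rw [Finset.prod_congr rfl (fun q hq => ?_), Finset.prod_const_one]
            rw [Finset.sum_congr rfl (fun j _ => if_neg (Finset.ne_of_mem_erase hq)), hmass q]
          rw [h2, Finset.sum_congr rfl (fun j _ => if_pos rfl), mul_one]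
  have expand : ∀ d' : Fin m → ℕ,
      (∏ q, W q (d' q)) * (1 + lam * ∑ s, c s * (d' s : ℝ))
        = (∏ q, W q (d' q)) + lam * ∑ s, c s * ((d' s : ℝ) * ∏ q, W q (d' q)) := by
    intro d'
    have h3 : ∑ s, c s * ((d' s : ℝ) * ∏ q, W q (d' q))
        = (∑ s, c s * (d' s : ℝ)) * ∏ q, W q (d' q) := by
      rw [Finset.sum_mul]
      exact Finset.sum_congr rfl fun s _ => by ring
    rw [h3]; ring
  rw [Finset.sum_congr rfl fun d' _ => expand d', Finset.sum_add_distrib, hmassT]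
  congr 1
  rw [← Finset.mul_sum]
  congr 1
  rw [Finset.sum_comm]
  exact Finset.sum_congr rfl fun s _ => by rw [← Finset.mul_sum, hmom s]

lemma diag_value (m : ℕ) (n : Fin m → ℕ) (hn : ∀ k, 2 ≤ n k) (lam ε : ℝ) (p : Fin m → ℝ)
    (γ : Fin m → Fin m → ℝ)
    (hdiag : ∀ k : Fin m,
      γ k k = 1 + lam * γ k k * (((n k : ℝ) - 2) * p k + 1)
        + lam * ∑ s ∈ Finset.univ \ {k}, γ k s * (n s : ℝ) * ε)
    (a : Fin m → (Fin m → ℕ) → ℝ)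
    (ha : ∀ (k : Fin m) (d : Fin m → ℕ), a k d = 1 + lam * ∑ l, γ k l * (d l : ℝ))
    (k : Fin m) :
    ∑ d' ∈ sbDomDiag m n k, sbWeightDiag m n p ε k d' * a k d' = γ k k := by
  classical
  set W : Fin m → ℕ → ℝ := fun q j =>
    if q = k then ((n k - 2).choose (j - 1) : ℝ) * p k ^ (j - 1) * (1 - p k) ^ (n k - 1 - j)
    else ((n q).choose j : ℝ) * ε ^ j * (1 - ε) ^ (n q - j) with hW
  set t : Fin m → Finset ℕ := fun q =>
    if q = k then Finset.Icc 1 (n k - 1) else Finset.range (n q + 1) with ht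
  have hweight : ∀ d' : Fin m → ℕ, sbWeightDiag m n p ε k d' = ∏ q, W q (d' q) := by
    intro d'
    rw [← Finset.mul_prod_erase Finset.univ (fun q => W q (d' q)) (Finset.mem_univ k)]
    simp only [sbWeightDiag]
    rw [Finset.sdiff_singleton_eq_erase]
    congr 1
    · simp only [hW, if_pos rfl]
    · exact Finset.prod_congr rfl fun q hq => by
        simp only [hW, if_neg (Finset.ne_of_mem_erase hq)]
  have hmass : ∀ q, ∑ j ∈ t q, W q j = 1 := by
    intro q
    by_cases hq : q = k
    · subst hq
      simp only [hW, ht, if_pos rfl]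
      have h2 : n q - 2 = (n q - 1) - 1 := by omega
      rw [h2]
      exact shift_mass (p q) (n q - 1) (by have := hn q; omega)
    · simp only [hW, ht, if_neg hq]
      exact binom_mass ε (n q)
  have hmu : ∀ s : Fin m, (∑ j ∈ t s, (j : ℝ) * W s j)
      = if s = k then 1 + ((n k : ℝ) - 2) * p k else (n s : ℝ) * ε := by
    intro s
    by_cases hs : s = k
    · subst hs
      simp only [hW, ht, if_pos rfl]
      have h2 : n s - 2 = (n s - 1) - 1 := by omega
      rw [h2, shift_mean (p s) (n s - 1) (by have := hn s; omega),
        Nat.cast_sub (by have := hn s; omega : 1 ≤ n s)]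
      push_cast; ring
    · simp only [hW, ht, if_neg hs]
      exact binom_mean ε (n s)
  have hdom : sbDomDiag m n k = Fintype.piFinset t := rfl
  have step1 : ∑ d' ∈ sbDomDiag m n k, sbWeightDiag m n p ε k d' * a k d'
      = ∑ d' ∈ Fintype.piFinset t, (∏ q, W q (d' q)) * (1 + lam * ∑ s, γ k s * (d' s : ℝ)) := by
    rw [hdom]
    exact Finset.sum_congr rfl fun d' _ => by rw [hweight d', ha k d']
  rw [step1, expectation_eq t W hmass lam (γ k)]
  have hsum : ∑ s, γ k s * (∑ j ∈ t s, (j : ℝ) * W s j)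
      = γ k k * (1 + ((n k : ℝ) - 2) * p k)
        + ∑ s ∈ Finset.univ.erase k, γ k s * (n s : ℝ) * ε := by
    rw [Finset.sum_congr rfl fun s _ => by rw [hmu s],
      ← Finset.add_sum_erase Finset.univ _ (Finset.mem_univ k), if_pos rfl]
    congr 1
    exact Finset.sum_congr rfl fun s hs => by
      rw [if_neg (Finset.ne_of_mem_erase hs)]; ring
  rw [hsum]
  have hd := hdiag k
  rw [Finset.sdiff_singleton_eq_erase] at hd
  linear_combination -hd

lemma off_value (m : ℕ) (n : Fin m → ℕ) (hn : ∀ k, 2 ≤ n k) (lam ε : ℝ) (p : Fin m → ℝ)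
    (γ : Fin m → Fin m → ℝ)
    (hoff : ∀ k l : Fin m, k ≠ l →
      γ k l = 1 + lam * γ l k * (((n k : ℝ) - 1) * ε + 1)
        + lam * γ l l * ((n l : ℝ) - 1) * p l
        + lam * ∑ s ∈ Finset.univ \ {k, l}, γ l s * (n s : ℝ) * ε)
    (a : Fin m → (Fin m → ℕ) → ℝ)
    (ha : ∀ (k : Fin m) (d : Fin m → ℕ), a k d = 1 + lam * ∑ l, γ k l * (d l : ℝ))
    (k l : Fin m) (hlk : l ≠ k) :
    ∑ d' ∈ sbDomOff m n k l, sbWeightOff m n p ε k l d' * a l d' = γ k l := by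
  classical
  have hkl : k ≠ l := Ne.symm hlk
  set W : Fin m → ℕ → ℝ := fun q j =>
    if q = k then ((n k - 1).choose (j - 1) : ℝ) * ε ^ (j - 1) * (1 - ε) ^ (n k - j)
    else if q = l then ((n l - 1).choose j : ℝ) * p l ^ j * (1 - p l) ^ (n l - 1 - j)
    else ((n q).choose j : ℝ) * ε ^ j * (1 - ε) ^ (n q - j) with hW
  set t : Fin m → Finset ℕ := fun q =>
    if q = k then Finset.Icc 1 (n k)
    else if q = l then Finset.range (n l)
    else Finset.range (n q + 1) with ht
  have hsub : ({k, l} : Finset (Fin m)) ⊆ Finset.univ := Finset.subset_univ _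
  have hweight : ∀ d' : Fin m → ℕ, sbWeightOff m n p ε k l d' = ∏ q, W q (d' q) := by
    intro d'
    rw [show (∏ q, W q (d' q))
        = (∏ q ∈ Finset.univ \ {k, l}, W q (d' q)) * ∏ q ∈ ({k, l} : Finset (Fin m)), W q (d' q)
      from (Finset.prod_sdiff hsub).symm, Finset.prod_pair hkl]
    have hk : W k (d' k)
        = ((n k - 1).choose (d' k - 1) : ℝ) * ε ^ (d' k - 1) * (1 - ε) ^ (n k - d' k) := by
      simp only [hW, if_pos rfl]
    have hl : W l (d' l)
        = ((n l - 1).choose (d' l) : ℝ) * p l ^ (d' l) * (1 - p l) ^ (n l - 1 - d' l) := by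
      simp [hW, hlk]
    have hrest : ∏ q ∈ Finset.univ \ {k, l}, W q (d' q)
        = ∏ q ∈ Finset.univ \ {k, l},
            ((n q).choose (d' q) : ℝ) * ε ^ (d' q) * (1 - ε) ^ (n q - d' q) := by
      refine Finset.prod_congr rfl fun q hq => ?_
      simp only [Finset.mem_sdiff, Finset.mem_insert, Finset.mem_singleton] at hq
      push_neg at hq
      simp only [hW, if_neg hq.2.1, if_neg hq.2.2]
    rw [hk, hl, hrest]
    simp only [sbWeightOff]
    ring
  have hmass : ∀ q, ∑ j ∈ t q, W q j = 1 := by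
    intro q
    by_cases hq : q = k
    · subst hq
      simp only [hW, ht, if_pos rfl]
      exact shift_mass ε (n q) (by have := hn q; omega)
    · by_cases hq' : q = l
      · subst hq'
        simp only [hW, ht, if_neg hq, if_pos rfl]
        exact binom_mass' (p q) (n q) (by have := hn q; omega)
      · simp only [hW, ht, if_neg hq, if_neg hq']
        exact binom_mass ε (n q)
  have hmu : ∀ s : Fin m, (∑ j ∈ t s, (j : ℝ) * W s j)
      = if s = k then 1 + ((n k : ℝ) - 1) * ε
        else if s = l then ((n l : ℝ) - 1) * p l else (n s : ℝ) * ε := by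
    intro s
    by_cases hs : s = k
    · simp only [hW, ht, if_pos hs]
      rw [shift_mean ε (n k) (by have := hn k; omega)]
    · by_cases hs' : s = l
      · subst hs'
        simp only [hW, ht, if_neg hs, if_pos rfl]
        exact binom_mean' (p s) (n s) (by have := hn s; omega)
      · simp only [hW, ht, if_neg hs, if_neg hs']
        exact binom_mean ε (n s)
  have hdom : sbDomOff m n k l = Fintype.piFinset t := rfl
  have step1 : ∑ d' ∈ sbDomOff m n k l, sbWeightOff m n p ε k l d' * a l d'
      = ∑ d' ∈ Fintype.piFinset t, (∏ q, W q (d' q)) * (1 + lam * ∑ s, γ l s * (d' s : ℝ)) := by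
    rw [hdom]
    exact Finset.sum_congr rfl fun d' _ => by rw [hweight d', ha l d']
  rw [step1, expectation_eq t W hmass lam (γ l)]
  have hsum : ∑ s, γ l s * (∑ j ∈ t s, (j : ℝ) * W s j)
      = γ l k * (1 + ((n k : ℝ) - 1) * ε) + γ l l * (((n l : ℝ) - 1) * p l)
        + ∑ s ∈ Finset.univ \ {k, l}, γ l s * (n s : ℝ) * ε := by
    rw [Finset.sum_congr rfl fun s _ => by rw [hmu s], ← Finset.sum_sdiff hsub,
      Finset.sum_pair hkl, if_pos rfl, if_neg hlk, if_pos rfl]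
    have hrest : ∑ s ∈ Finset.univ \ {k, l},
        γ l s * (if s = k then 1 + ((n k : ℝ) - 1) * ε
          else if s = l then ((n l : ℝ) - 1) * p l else (n s : ℝ) * ε)
        = ∑ s ∈ Finset.univ \ {k, l}, γ l s * (n s : ℝ) * ε := by
      refine Finset.sum_congr rfl fun s hs => ?_
      simp only [Finset.mem_sdiff, Finset.mem_insert, Finset.mem_singleton] at hs
      push_neg at hs
      rw [if_neg hs.2.1, if_neg hs.2.2]; ring
    rw [hrest]
    ring
  rw [hsum]
  linear_combination -(hoff k l hkl)

/-- Proposition 3: If `γ` solves the stochastic-block complementarity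
system, then the profile `a_k(d) = 1 + λ ∑_l γ_{kl} d_l` satisfies the interim
best-response system `a_k(d) = 1 + λ ∑_l d_l · T_{kl}` where `T_{kl}` is the interim
expectation of the neighbor's action under the product-of-binomials beliefs. -/
theorem stmt_16 (m : ℕ) (hm : 2 ≤ m) (n : Fin m → ℕ) (hn : ∀ k, 2 ≤ n k)
    (lam ε : ℝ) (p : Fin m → ℝ) (γ : Fin m → Fin m → ℝ)
    (hoff : ∀ k l : Fin m, k ≠ l →
      γ k l = 1 + lam * γ l k * (((n k : ℝ) - 1) * ε + 1)
        + lam * γ l l * ((n l : ℝ) - 1) * p l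
        + lam * ∑ s ∈ Finset.univ \ {k, l}, γ l s * (n s : ℝ) * ε)
    (hdiag : ∀ k : Fin m,
      γ k k = 1 + lam * γ k k * (((n k : ℝ) - 2) * p k + 1)
        + lam * ∑ s ∈ Finset.univ \ {k}, γ k s * (n s : ℝ) * ε)
    (a : Fin m → (Fin m → ℕ) → ℝ)
    (ha : ∀ (k : Fin m) (d : Fin m → ℕ), a k d = 1 + lam * ∑ l, γ k l * (d l : ℝ)) :
    ∀ (k : Fin m) (d : Fin m → ℕ),
      a k d = 1 + lam * ∑ l, (d l : ℝ) *
        (if l = k then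
          ∑ d' ∈ sbDomDiag m n k, sbWeightDiag m n p ε k d' * a k d'
        else
          ∑ d' ∈ sbDomOff m n k l, sbWeightOff m n p ε k l d' * a l d') := by
  intro k d
  have key : ∑ l, (d l : ℝ) *
      (if l = k then
        ∑ d' ∈ sbDomDiag m n k, sbWeightDiag m n p ε k d' * a k d'
      else
        ∑ d' ∈ sbDomOff m n k l, sbWeightOff m n p ε k l d' * a l d')
      = ∑ l, γ k l * (d l : ℝ) := by
    refine Finset.sum_congr rfl fun l _ => ?_
    by_cases hl : l = k
    · rw [if_pos hl, diag_value m n hn lam ε p γ hdiag a ha k, hl]; ring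
    · rw [if_neg hl, off_value m n hn lam ε p γ hoff a ha k l hl]; ring
  rw [key]
  exact ha k d
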